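/- The ×-homotopy fundamental group of the hypercube H(d,2), based at any vertex, is trivial. -/

import Mathlib

/-- The Hamming graph `H(d,q)`: vertices are functions `Fin d → Fin q`,
adjacent iff they differ in exactly one coordinate. -/
def hammingGraph (d q : ℕ) : SimpleGraph (Fin d → Fin q) where
  Adj v w := ∃! i, v i ≠ w i
  symm := by
    constructor
    rintro v w ⟨i, hi, hu⟩
    exact ⟨i, hi.symm, fun j hj => hu j hj.symm⟩
  loopless := by
    constructor
    rintro v ⟨i, hi, -⟩
    exact hi rfl

/-- `l` is (the list of vertices of) a walk in `G` from `a` to `b`. -/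
def IsWalkOn {V : Type*} (G : SimpleGraph V) (a b : V) (l : List V) : Prop :=
  l.Chain' G.Adj ∧ l.head? = some a ∧ l.getLast? = some b

/-- Elementary moves on walks: prunes (and their inverses, anti-prunes,
via symmetry) and spider moves. -/
inductive Move {V : Type*} (G : SimpleGraph V) : List V → List V → Prop
  | prune (xs ys : List V) (u v : V) (huv : G.Adj u v) :
      Move G (xs ++ u :: v :: u :: ys) (xs ++ u :: ys)
  | spider (xs ys : List V) (u v v' w : V) (hne : v ≠ v')
      (h1 : G.Adj u v') (h2 : G.Adj v' w) :
      Move G (xs ++ u :: v :: w :: ys) (xs ++ u :: v' :: w :: ys)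

/-- ×-homotopy rel endpoints: the equivalence relation generated by prunes,
anti-prunes and spider moves. -/
def Homotopic {V : Type*} (G : SimpleGraph V) : List V → List V → Prop :=
  Relation.EqvGen (Move G)

/-- Concatenation of walks sharing an endpoint. -/
def wcat {V : Type*} (l1 l2 : List V) : List V := l1 ++ l2.tail

/-- Concatenation of a list of closed walks based at `z`. -/
def wprod {V : Type*} (z : V) (ws : List (List V)) : List V := ws.foldr wcat [z]

/-- `u` and `v` differ exactly in coordinate `i`. -/
def DiffAt {d q : ℕ} (u v : Fin d → Fin q) (i : Fin d) : Prop :=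
  u i ≠ v i ∧ ∀ j, j ≠ i → u j = v j

/-- A ground walk in coordinate `i`: a closed 3-walk at the all-zeros vertex
whose intermediate vertices are nonzero only in coordinate `i`. -/
def IsGroundWalk (d q : ℕ) [NeZero q] (i : Fin d) (l : List (Fin d → Fin q)) : Prop :=
  ∃ a b : Fin q, a ≠ 0 ∧ b ≠ 0 ∧ a ≠ b ∧
    l = [(0 : Fin d → Fin q), Function.update (0 : Fin d → Fin q) i a,
      Function.update (0 : Fin d → Fin q) i b, 0]

/-- Number of steps of a walk in which coordinate `i` changes. -/
def changeCount {d q : ℕ} (i : Fin d) : List (Fin d → Fin q) → ℕ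
  | x :: y :: rest => (if x i = y i then 0 else 1) + changeCount i (y :: rest)
  | _ => 0

-- auxiliary lemmas

lemma move_lift {V : Type*} {G : SimpleGraph V} (xs : List V) {l1 l2 : List V}
    (h : Move G l1 l2) : Move G (xs ++ l1) (xs ++ l2) := by
  cases h with
  | prune ys zs u v huv =>
      rw [← List.append_assoc, ← List.append_assoc]
      exact .prune _ _ _ _ huv
  | spider ys zs u v v' w hne h1 h2 =>
      rw [← List.append_assoc, ← List.append_assoc]
      exact .spider _ _ _ _ _ _ hne h1 h2

lemma homotopic_lift {V : Type*} {G : SimpleGraph V} (xs : List V) {l1 l2 : List V}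
    (h : Homotopic G l1 l2) : Homotopic G (xs ++ l1) (xs ++ l2) := by
  induction h with
  | rel a b hab => exact .rel _ _ (move_lift xs hab)
  | refl a => exact .refl _
  | symm a b _ ih => exact .symm _ _ ih
  | trans a b c _ _ ih1 ih2 => exact .trans _ _ _ ih1 ih2

lemma adj_iff_diffAt {d : ℕ} {u v : Fin d → Fin 2} :
    (hammingGraph d 2).Adj u v ↔ ∃ i, DiffAt u v i := by
  constructor
  · rintro ⟨i, hi, hu⟩
    exact ⟨i, hi, fun j hj => by
      by_contra hne; exact hj (hu j hne)⟩
  · rintro ⟨i, hi, hall⟩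
    exact ⟨i, hi, fun j hj => by
      by_contra hne; exact hj (hall j hne)⟩

lemma diffAt_symm {d q : ℕ} {u v : Fin d → Fin q} {i : Fin d}
    (h : DiffAt u v i) : DiffAt v u i :=
  ⟨h.1.symm, fun j hj => (h.2 j hj).symm⟩

lemma fin2_eq {a b c : Fin 2} (h1 : a ≠ b) (h2 : c ≠ b) : a = c := by
  omega

/-- Core reduction: if the first edge flips coordinate `i` and the walk ends with
coordinate `i` back at its original value, the walk can be shortened by 2. -/
lemma red (d : ℕ) : ∀ (l : List (Fin d → Fin 2)) (u v : Fin d → Fin 2) (i : Fin d),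
    DiffAt v u i → List.Chain' (hammingGraph d 2).Adj (v :: l) →
    (∀ z, (v :: l).getLast? = some z → z i = u i) →
    ∃ m, Homotopic (hammingGraph d 2) (u :: v :: l) (u :: m) ∧
      List.Chain' (hammingGraph d 2).Adj (u :: m) ∧
      (u :: m).getLast? = (v :: l).getLast? ∧ m.length + 1 = l.length := by
  intro l
  induction l with
  | nil =>
      intro u v i hdiff _ hlast
      exact absurd (hlast v rfl) hdiff.1
  | cons w l' ih =>
      intro u v i hdiff hchain hlast
      have hadj_vw : (hammingGraph d 2).Adj v w := hchain.rel_head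
      have hadj_uv : (hammingGraph d 2).Adj u v :=
        (hammingGraph d 2).adj_symm (adj_iff_diffAt.2 ⟨i, hdiff⟩)
      by_cases hw : w = u
      · subst hw
        refine ⟨l', ?_, ?_, ?_, rfl⟩
        · exact .rel _ _ (Move.prune [] l' _ _ ((hammingGraph d 2).adj_symm hadj_vw))
        · exact hchain.tail
        · simp only [List.getLast?_cons_cons]
      · obtain ⟨k, hk⟩ := adj_iff_diffAt.1 hadj_vw
        have hki : k ≠ i := by
          intro hki; subst hki
          apply hw
          funext j
          by_cases hj : j = k
          · subst hj; exact (fin2_eq hk.1.symm hdiff.1.symm)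
          · exact ((hk.2 j hj).symm.trans (hdiff.2 j hj))
        set v' := Function.update u k (w k) with hv'
        have hvk : v k = u k := hdiff.2 k hki
        have hv'_k : v' k = w k := Function.update_self k (w k) u
        have hv'_ne : ∀ j, j ≠ k → v' j = u j := fun j hj =>
          Function.update_of_ne hj (w k) u
        have hd1 : DiffAt u v' k := by
          refine ⟨?_, fun j hj => (hv'_ne j hj).symm⟩
          rw [hv'_k]
          exact fun h => hk.1 (hvk.trans h)
        have hd2 : DiffAt v' w i := by
          constructor
          · rw [hv'_ne i (Ne.symm hki)]
            rw [← hk.2 i (Ne.symm hki)]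
            exact fun h => hdiff.1 h.symm
          · intro j hj
            by_cases hjk : j = k
            · subst hjk; exact hv'_k
            · rw [hv'_ne j hjk, ← hdiff.2 j hj, hk.2 j hjk]
        have hvv' : v ≠ v' := by
          intro h
          apply hdiff.1
          rw [h, hv'_ne i (Ne.symm hki)]
        have hadj_uv' : (hammingGraph d 2).Adj u v' := adj_iff_diffAt.2 ⟨k, hd1⟩
        have hadj_v'w : (hammingGraph d 2).Adj v' w := adj_iff_diffAt.2 ⟨i, hd2⟩
        -- recursive call on l' with the pair (v', w)
        have hlast' : ∀ z, (w :: l').getLast? = some z → z i = v' i := by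
          intro z hz
          have : (v :: w :: l').getLast? = some z := by
            rwa [List.getLast?_cons_cons]
          rw [hv'_ne i (Ne.symm hki)]
          exact hlast z this
        obtain ⟨m', hhom, hchain', hlast'', hlen⟩ :=
          ih v' w i (diffAt_symm hd2) hchain.tail hlast'
        refine ⟨v' :: m', ?_, ?_, ?_, by simpa using hlen⟩
        · refine .trans _ _ _ (.rel _ _ (Move.spider [] l' u v v' w hvv' hadj_uv' hadj_v'w)) ?_
          exact homotopic_lift [u] hhom
        · exact List.IsChain.cons_cons hadj_uv' hchain'
        · rw [List.getLast?_cons_cons, hlast'', List.getLast?_cons_cons]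

lemma main_lemma (d : ℕ) : ∀ (n : ℕ) (l : List (Fin d → Fin 2)) (v : Fin d → Fin 2),
    l.length ≤ n → IsWalkOn (hammingGraph d 2) v v l →
    Homotopic (hammingGraph d 2) l [v] := by
  intro n
  induction n with
  | zero =>
      intro l v hlen hwalk
      rw [Nat.le_zero, List.length_eq_zero_iff] at hlen
      subst hlen
      exact absurd hwalk.2.1 (by simp)
  | succ n ih =>
      intro l v hlen hwalk
      obtain ⟨hchain, hhead, hlast⟩ := hwalk
      rcases l with _ | ⟨x, _ | ⟨y, t⟩⟩
      · simp at hhead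
      · simp at hhead
        subst hhead
        exact .refl _
      · 
          have hx : v = x := (by simpa using hhead : x = v).symm
          subst hx
          have hadj : (hammingGraph d 2).Adj v y := hchain.rel_head
          obtain ⟨i, hi⟩ := adj_iff_diffAt.1 hadj
          have hlast2 : (y :: t).getLast? = some v := by
            rwa [List.getLast?_cons_cons] at hlast
          obtain ⟨m, hhom, hchain', hlast', hlen'⟩ :=
            red d t v y i (diffAt_symm hi) hchain.tail
              (fun z hz => by rw [hlast2] at hz; injection hz with h; rw [h])
          have hlenm : (v :: m).length ≤ n := by
            simp at hlen ⊢
            omega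
          have hwalk' : IsWalkOn (hammingGraph d 2) v v (v :: m) :=
            ⟨hchain', by simp, by rw [hlast', hlast2]⟩
          exact .trans _ _ _ hhom (ih (v :: m) v hlenm hwalk')


/-- the ×-homotopy fundamental group of the hypercube `H(d,2)`, based
at any vertex, is trivial: every closed walk is homotopic to the trivial walk. -/
theorem stmt6 (d : ℕ) (v : Fin d → Fin 2) (l : List (Fin d → Fin 2))
    (hl : IsWalkOn (hammingGraph d 2) v v l) :
    Homotopic (hammingGraph d 2) l [v] :=
  main_lemma d l.length l v le_rfl hl
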